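/- Let K be a number field, let X/K be a complete nonsingular curve of genus 1, let f : X → X be a morphism of degree d ≥ 2 defined over K, and let α ∈ X(K). Then the Minkowski dimension dim(G_{f,α}) exists and dim(G_{f,α}) = 0. -/

import Mathlib

open scoped Classical

noncomputable section

/-! ### Minkowski dimension machinery for groups of automorphisms of rooted trees

A rooted tree is presented by its levels `V 0, V 1, V 2, …` (with `V 0` the root level)
together with parent maps `V (n+1) → V n`.  An automorphism is a family of permutations
of the levels commuting with the parent maps; it is in particular determined by a point of
`∀ k, Equiv.Perm (V k)`.  The restriction `r_n σ` of `σ` to the height-`n` subtree is the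
tuple `(σ 0, …, σ n)`, and the natural metric is
`d(σ,τ) = inf { d!^{-(dⁿ-1)/(d-1)} : r_n σ = r_n τ }`. -/

/-- The exponent `(dⁿ - 1)/(d - 1) = 1 + d + ⋯ + d^(n-1)`. -/
def scaleExp (d n : ℕ) : ℕ := ∑ i ∈ Finset.range n, d ^ i

/-- The scale `ε_n = d!^{-(dⁿ-1)/(d-1)}`, i.e. `1/|Aut(Tₙᶜᵒᵐ)|`. -/
def treeScale (d n : ℕ) : ℝ := ((d.factorial : ℝ) ^ scaleExp d n)⁻¹

/-- Two families of level permutations restrict to the same automorphism of the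
height-`n` subtree. -/
def AgreeUpTo {V : ℕ → Type*} (n : ℕ) (σ τ : ∀ k, Equiv.Perm (V k)) : Prop :=
  ∀ k, k ≤ n → σ k = τ k

/-- The natural metric on automorphisms of a rooted `d`-ary tree:
`d(σ,τ) = inf { d!^{-(dⁿ-1)/(d-1)} : σ and τ agree on the height-n subtree }`. -/
def treeDist {V : ℕ → Type*} (d : ℕ) (σ τ : ∀ k, Equiv.Perm (V k)) : ℝ :=
  sInf {x : ℝ | ∃ n : ℕ, AgreeUpTo n σ τ ∧ x = treeScale d n}

/-- `N_{ε_n}(G)`: the least number of balls of radius `ε_n = treeScale d n` needed to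
cover `G`. -/
def coverNum {V : ℕ → Type*} (d : ℕ) (G : Set (∀ k, Equiv.Perm (V k))) (n : ℕ) : ℕ :=
  sInf {m : ℕ | ∃ s : Finset (∀ k, Equiv.Perm (V k)), s.card = m ∧
    G ⊆ ⋃ σ ∈ s, {τ | treeDist d σ τ ≤ treeScale d n}}

/-- The lower Minkowski dimension `liminf_{ε → 0} log N_ε(G) / log (1/ε)` (computed
along the scales `ε_n` of the metric). -/
def dimLower {V : ℕ → Type*} (d : ℕ) (G : Set (∀ k, Equiv.Perm (V k))) : ℝ :=
  Filter.liminf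
    (fun n : ℕ => Real.log (coverNum d G n : ℝ) / Real.log (1 / treeScale d n)) Filter.atTop

/-- The upper Minkowski dimension `limsup_{ε → 0} log N_ε(G) / log (1/ε)` (computed
along the scales `ε_n` of the metric). -/
def dimUpper {V : ℕ → Type*} (d : ℕ) (G : Set (∀ k, Equiv.Perm (V k))) : ℝ :=
  Filter.limsup
    (fun n : ℕ => Real.log (coverNum d G n : ℝ) / Real.log (1 / treeScale d n)) Filter.atTop

/-- The Minkowski dimension of `G` exists and equals `x`. -/
def HasDim {V : ℕ → Type*} (d : ℕ) (G : Set (∀ k, Equiv.Perm (V k))) (x : ℝ) : Prop :=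
  dimLower d G = x ∧ dimUpper d G = x

/-- `G` is closed for the natural metric. -/
def IsDistClosed {V : ℕ → Type*} (d : ℕ) (G : Set (∀ k, Equiv.Perm (V k))) : Prop :=
  ∀ σ, (∀ ε : ℝ, 0 < ε → ∃ τ ∈ G, treeDist d σ τ ≤ ε) → σ ∈ G

/-- The closure of `G` for the natural metric. -/
def distClosure {V : ℕ → Type*} (d : ℕ) (G : Set (∀ k, Equiv.Perm (V k))) :
    Set (∀ k, Equiv.Perm (V k)) :=
  {σ | ∀ ε : ℝ, 0 < ε → ∃ τ ∈ G, treeDist d σ τ ≤ ε}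

/-- `|r_n(G)|`: the cardinality of the restriction of `G` to the height-`n` subtree. -/
def levelCard {V : ℕ → Type*} (G : Set (∀ k, Equiv.Perm (V k))) (n : ℕ) : ℕ :=
  Nat.card ((fun (σ : ∀ k, Equiv.Perm (V k)) (k : Fin (n + 1)) => σ k.1) '' G)

end
noncomputable section

/-- A fixed algebraic closure `K̄` of `K`. -/
abbrev Kbar (K : Type*) [Field K] : Type _ := AlgebraicClosure K

/-- The level-`n` vertices of the preimage tree of `α` under `φ`: the set
`φ^{-n}(α)`. -/
abbrev preV {Pts : Type*} (φ : Pts → Pts) (α : Pts) (n : ℕ) : Type _ :=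
  {β : Pts // φ^[n] β = α}

/-- The parent map of the preimage tree: a vertex `β ∈ φ^{-(n+1)}(α)` is joined to
`φ(β) ∈ φ^{-n}(α)`. -/
def preParent {Pts : Type*} (φ : Pts → Pts) (α : Pts) (n : ℕ)
    (β : preV φ α (n + 1)) : preV φ α n :=
  ⟨φ β.1, by have h := β.2; rwa [Function.iterate_succ_apply] at h⟩

/-- The image `G_{φ,α}` of the arboreal Galois representation attached to `(φ, α)` over
the base field `L` (an intermediate field of `K̄/K`): the set of families of level
permutations of the preimage tree induced by elements of `Gal(K̄/L)`, acting on points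
via `act`. -/
def arbGal {K : Type*} [Field K] {Pts : Type*}
    (act : (Kbar K ≃ₐ[K] Kbar K) → Pts → Pts) (L : IntermediateField K (Kbar K))
    (φ : Pts → Pts) (α : Pts) : Set (∀ n, Equiv.Perm (preV φ α n)) :=
  {g | ∃ σ : Kbar K ≃ₐ[K] Kbar K, (∀ x ∈ L, σ x = x) ∧
    ∀ (n : ℕ) (β : preV φ α n), (g n β : Pts) = act σ (β : Pts)}

end
/-- The `m`-torsion subgroup of an abelian group. -/
def torsSub (A : Type*) [AddCommGroup A] (m : ℕ) : AddSubgroup A where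
  carrier := {x | m • x = 0}
  zero_mem' := by simp
  add_mem' := by
    intro a b ha hb
    simp only [Set.mem_setOf_eq] at *
    rw [smul_add, ha, hb, add_zero]
  neg_mem' := by
    intro a ha
    simp only [Set.mem_setOf_eq] at *
    rw [smul_neg, ha, neg_zero]

lemma treeScale_pos (d n : ℕ) : 0 < treeScale d n := by
  unfold treeScale
  apply inv_pos.mpr
  apply pow_pos
  exact_mod_cast d.factorial_pos

lemma treeDist_le_of_agree {V : ℕ → Type*} {d n : ℕ} {σ τ : ∀ k, Equiv.Perm (V k)}
    (h : AgreeUpTo n σ τ) : treeDist d σ τ ≤ treeScale d n := by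
  apply csInf_le
  · refine ⟨0, fun x hx => ?_⟩
    obtain ⟨j, -, rfl⟩ := hx
    exact (treeScale_pos d j).le
  · exact ⟨n, h, rfl⟩

/-- **Genus one curves have small arboreal image.**  A complete nonsingular curve of
genus `1` over `K` with the base point `α ∈ X(K)` is an elliptic curve with origin
`α`; its `K̄`-points form an abelian group `A` on which `Gal(K̄/K)` acts by additive
automorphisms, with `m`-torsion subgroup isomorphic to `(ℤ/m)²`.  A morphism
`f : X → X` of degree `d` defined over `K` is of the form `f(P) = g(P) + T` for an
isogeny `g` admitting a dual `ĝ` with `ĝ∘g = g∘ĝ = [d]`.  Conclusion: the Minkowski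
dimension of `G_{f,α}` exists and is `0`. -/
theorem arboreal_genus_one_small {K : Type*} [Field K] [NumberField K] {d : ℕ}
    (hd : 2 ≤ d) (A : Type*) [AddCommGroup A]
    (act : (Kbar K ≃ₐ[K] Kbar K) →* Multiplicative (AddAut A))
    (fod : A → IntermediateField K (Kbar K))
    (fod_fin : ∀ P : A, FiniteDimensional K (fod P))
    (fod_spec : ∀ (σ : Kbar K ≃ₐ[K] Kbar K) (P : A), Multiplicative.toAdd (act σ) P = P ↔ ∀ x ∈ fod P, σ x = x)
    (htors : ∀ m : ℕ, 0 < m → Nonempty (torsSub A m ≃+ ZMod m × ZMod m))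
    (f : A → A) (g : A →+ A) (T : A) (hf : ∀ P : A, f P = g P + T)
    (hequiv : ∀ (σ : Kbar K ≃ₐ[K] Kbar K) (P : A), f (Multiplicative.toAdd (act σ) P) = Multiplicative.toAdd (act σ) (f P))
    (hdual : ∃ gd : A →+ A, (∀ P : A, gd (g P) = d • P) ∧ ∀ P : A, g (gd P) = d • P) :
    HasDim d (arbGal (K := K) (fun σ => ⇑(Multiplicative.toAdd (act σ))) ⊥ f (0 : A)) 0 := by
  let act : (Kbar K ≃ₐ[K] Kbar K) → AddAut A := fun σ => Multiplicative.toAdd (act σ)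
  have hequiv : ∀ (σ : Kbar K ≃ₐ[K] Kbar K) (P : A), f (act σ P) = act σ (f P) := hequiv
  change HasDim d (arbGal (K := K) (fun σ => ⇑(act σ)) ⊥ f (0 : A)) 0
  clear_value act
  obtain ⟨gd, hgd1, -⟩ := hdual
  set G := arbGal (K := K) (fun σ => ⇑(act σ)) ⊥ f (0 : A) with hGdef
  -- basic iteration lemmas
  have hfsub : ∀ (k : ℕ) (x y : A), f^[k] x - f^[k] y = (⇑g)^[k] (x - y) := by
    intro k
    induction k with
    | zero => intro x y; simp
    | succ k ih =>
      intro x y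
      rw [Function.iterate_succ_apply', Function.iterate_succ_apply',
        Function.iterate_succ_apply', hf, hf]
      have h1 : g (f^[k] x) + T - (g (f^[k] y) + T) = g (f^[k] x - f^[k] y) := by
        rw [map_sub]; abel
      rw [h1, ih]
  have hgsmul : ∀ (k c : ℕ) (x : A), (⇑g)^[k] (c • x) = c • (⇑g)^[k] x := by
    intro k c
    induction k with
    | zero => intro x; simp
    | succ k ih =>
      intro x
      rw [Function.iterate_succ_apply', Function.iterate_succ_apply', ih, map_nsmul]
  have hgditer : ∀ (k : ℕ) (x : A), (⇑gd)^[k] ((⇑g)^[k] x) = d ^ k • x := by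
    intro k
    induction k with
    | zero => intro x; simp
    | succ k ih =>
      intro x
      rw [Function.iterate_succ_apply (⇑gd), Function.iterate_succ_apply' (⇑g),
        hgd1, ← hgsmul, ih, smul_smul, ← pow_succ]
  have hker : ∀ (k : ℕ) (x : A), (⇑g)^[k] x = 0 → d ^ k • x = 0 := by
    intro k x hx
    rw [← hgditer k x, hx, Function.iterate_fixed (map_zero gd) k]
  have hmemtors : ∀ (n k : ℕ), k ≤ n → ∀ x y : A, f^[k] x = 0 → f^[k] y = 0 →
      (x - y) ∈ torsSub A (d ^ n) := by
    intro n k hk x y hx hy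
    show d ^ n • (x - y) = 0
    have h1 : (⇑g)^[k] (x - y) = 0 := by
      rw [← hfsub k x y, hx, hy, sub_self]
    have h2 : d ^ k • (x - y) = 0 := hker k _ h1
    have hnk : d ^ n • (x - y) = d ^ (n - k) • d ^ k • (x - y) := by
      rw [smul_smul, ← pow_add, Nat.sub_add_cancel hk]
    rw [hnk, h2, smul_zero]
  have hcomm : ∀ (σ : Kbar K ≃ₐ[K] Kbar K) (k : ℕ) (x : A),
      f^[k] (act σ x) = act σ (f^[k] x) := by
    intro σ k
    induction k with
    | zero => intro x; simp
    | succ k ih =>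
      intro x
      rw [Function.iterate_succ_apply', Function.iterate_succ_apply', ih, hequiv]
  -- the covering number estimate
  have key : ∀ n : ℕ, coverNum d G n ≤ (d ^ n * d ^ n) ^ (n + 3) := by
    intro n
    set m := d ^ n with hm
    haveI : NeZero m := ⟨pow_ne_zero n (by omega)⟩
    have hm0 : 0 < m := Nat.pos_of_ne_zero (NeZero.ne m)
    obtain ⟨e⟩ := htors m hm0
    haveI : Fintype (torsSub A m) := Fintype.ofEquiv _ e.toEquiv.symm
    set e1 : A := ((e.symm (1, 0) : torsSub A m) : A) with he1
    set e2 : A := ((e.symm (0, 1) : torsSub A m) : A) with he2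
    -- decomposition of torsion points over the two generators
    have decomp : ∀ t : torsSub A m,
        (t : A) = (e t).1.val • e1 + (e t).2.val • e2 := by
      intro t
      have h1 : e t = (e t).1.val • ((1, 0) : ZMod m × ZMod m)
          + (e t).2.val • ((0, 1) : ZMod m × ZMod m) := by
        have hc1 : ((e t).1.val : ZMod m) = (e t).1 := ZMod.natCast_rightInverse (e t).1
        have hc2 : ((e t).2.val : ZMod m) = (e t).2 := ZMod.natCast_rightInverse (e t).2
        ext
        · simp [nsmul_eq_mul, hc1]
        · simp [nsmul_eq_mul, hc2]
      have h2 : t = (e t).1.val • e.symm (1, 0) + (e t).2.val • e.symm (0, 1) := by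
        conv_lhs => rw [← e.symm_apply_apply t]
        rw [← map_nsmul, ← map_nsmul, ← map_add, ← h1]
      conv_lhs => rw [h2]
      push_cast
      rw [he1, he2]
    -- base points of the fibers
    set base : ℕ → A := fun k => if h : ∃ β : A, f^[k] β = 0 then h.choose else 0
      with hbase
    have base_spec : ∀ k : ℕ, (∃ β : A, f^[k] β = 0) → f^[k] (base k) = 0 := by
      intro k h
      simp only [hbase, dif_pos h]
      exact h.choose_spec
    -- the reconstruction map
    set Φ : ((torsSub A m × torsSub A m) × (Fin (n + 1) → torsSub A m)) →
        (∀ k : Fin (n + 1), preV f 0 k.1 → A) :=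
      fun p k β =>
        base k.1 + ((p.2 k : A)) +
          (if hx : β.1 - base k.1 ∈ torsSub A m then
            (e ⟨β.1 - base k.1, hx⟩).1.val • (p.1.1 : A)
              + (e ⟨β.1 - base k.1, hx⟩).2.val • (p.1.2 : A)
          else 0) with hΦ
    set mapJ : (∀ k, Equiv.Perm (preV f 0 k)) → (∀ k : Fin (n + 1), preV f 0 k.1 → A) :=
      fun τ k β => ((τ k.1) β : A) with hmapJ
    -- surjectivity of Φ onto the restrictions of G
    have surj : ∀ τ ∈ G, ∃ p, Φ p = mapJ τ := by
      rintro τ ⟨σ, -, hστ⟩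
      have hsz : (act σ) (0 : A) = 0 := map_zero _
      have hTmap : ∀ t : A, t ∈ torsSub A m → act σ t ∈ torsSub A m := by
        intro t ht
        have ht' : m • t = 0 := ht
        show m • act σ t = 0
        rw [← map_nsmul, ht', hsz]
      have hσe1 : act σ e1 ∈ torsSub A m := hTmap _ (e.symm (1, 0)).2
      have hσe2 : act σ e2 ∈ torsSub A m := hTmap _ (e.symm (0, 1)).2
      have hbmem : ∀ k : Fin (n + 1), Nonempty (preV f 0 k.1) →
          act σ (base k.1) - base k.1 ∈ torsSub A m := by
        intro k hne
        obtain ⟨β⟩ := hne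
        have hex : ∃ x : A, f^[k.1] x = 0 := ⟨β.1, β.2⟩
        have hb := base_spec k.1 hex
        have h2 : f^[k.1] (act σ (base k.1)) = 0 := by rw [hcomm σ k.1, hb, hsz]
        exact hmemtors n k.1 (Nat.lt_succ_iff.mp k.2) _ _ h2 hb
      refine ⟨((⟨act σ e1, hσe1⟩, ⟨act σ e2, hσe2⟩),
        fun k => if hne : Nonempty (preV f 0 k.1) then
          ⟨act σ (base k.1) - base k.1, hbmem k hne⟩ else 0), ?_⟩
      funext k β
      have hβ0 : f^[k.1] β.1 = 0 := β.2
      have hbs : f^[k.1] (base k.1) = 0 := base_spec k.1 ⟨β.1, hβ0⟩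
      have hβT : β.1 - base k.1 ∈ torsSub A m :=
        hmemtors n k.1 (Nat.lt_succ_iff.mp k.2) _ _ hβ0 hbs
      have hne : Nonempty (preV f 0 k.1) := ⟨β⟩
      have hmJ : mapJ τ k β = act σ β.1 := hστ k.1 β
      have hψ : (if hx : β.1 - base k.1 ∈ torsSub A m then
            (e ⟨β.1 - base k.1, hx⟩).1.val • (act σ e1)
              + (e ⟨β.1 - base k.1, hx⟩).2.val • (act σ e2)
          else 0) = act σ (β.1 - base k.1) := by
        rw [dif_pos hβT]
        have hdec := decomp ⟨β.1 - base k.1, hβT⟩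
        have : act σ ((⟨β.1 - base k.1, hβT⟩ : torsSub A m) : A)
            = (e ⟨β.1 - base k.1, hβT⟩).1.val • act σ e1
              + (e ⟨β.1 - base k.1, hβT⟩).2.val • act σ e2 := by
          rw [hdec, map_add, map_nsmul, map_nsmul]
        exact this.symm
      have hΦval : Φ ((⟨act σ e1, hσe1⟩, ⟨act σ e2, hσe2⟩),
          fun k => if hne : Nonempty (preV f 0 k.1) then
            ⟨act σ (base k.1) - base k.1, hbmem k hne⟩ else 0) k β
          = base k.1 + (act σ (base k.1) - base k.1) + act σ (β.1 - base k.1) := by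
        simp only [hΦ, dif_pos hne, hψ]
      rw [hΦval, hmJ, map_sub]
      abel
    -- assemble the cover
    set pickG : (∀ k : Fin (n + 1), preV f 0 k.1 → A) → (∀ k, Equiv.Perm (preV f 0 k)) :=
      fun r => if h : ∃ τ' ∈ G, mapJ τ' = r then h.choose else fun _ => Equiv.refl _
      with hpickG
    set s : Finset (∀ k, Equiv.Perm (preV f 0 k)) :=
      Finset.image (fun p => pickG (Φ p)) Finset.univ with hs
    have cover : G ⊆ ⋃ σ' ∈ s, {τ | treeDist d σ' τ ≤ treeScale d n} := by
      intro τ hτ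
      obtain ⟨p, hp⟩ := surj τ hτ
      refine Set.mem_iUnion₂.mpr ⟨pickG (Φ p),
        Finset.mem_image_of_mem _ (Finset.mem_univ p), ?_⟩
      have hex : ∃ τ' ∈ G, mapJ τ' = Φ p := ⟨τ, hτ, hp.symm⟩
      have hpick : pickG (Φ p) = hex.choose := by
        simp only [hpickG, dif_pos hex]
      obtain ⟨hGmem, hmap⟩ := hex.choose_spec
      have hagree : AgreeUpTo n (pickG (Φ p)) τ := by
        intro k hk
        rw [hpick]
        ext β
        have h1 : mapJ hex.choose ⟨k, Nat.lt_succ_of_le hk⟩ β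
            = mapJ τ ⟨k, Nat.lt_succ_of_le hk⟩ β := by rw [hmap, hp]
        simpa only [hmapJ] using h1
      exact treeDist_le_of_agree hagree
    have h1 : coverNum d G n ≤ s.card := Nat.sInf_le ⟨s, rfl, cover⟩
    have h2 : s.card ≤ Fintype.card
        ((torsSub A m × torsSub A m) × (Fin (n + 1) → torsSub A m)) := by
      calc s.card ≤ (Finset.univ : Finset
            ((torsSub A m × torsSub A m) × (Fin (n + 1) → torsSub A m))).card :=
          Finset.card_image_le
        _ = _ := Finset.card_univ
    have hcardT : Fintype.card (torsSub A m) = m * m := by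
      rw [Fintype.card_congr e.toEquiv, Fintype.card_prod, ZMod.card]
    have h3 : Fintype.card
        ((torsSub A m × torsSub A m) × (Fin (n + 1) → torsSub A m))
        = (m * m) ^ (n + 3) := by
      rw [Fintype.card_prod, Fintype.card_prod, Fintype.card_fun, Fintype.card_fin, hcardT]
      ring
    calc coverNum d G n ≤ s.card := h1
      _ ≤ _ := h2
      _ = (m * m) ^ (n + 3) := h3
  -- analytic part
  have hden : ∀ j : ℕ, Real.log (1 / treeScale d j)
      = (scaleExp d j : ℝ) * Real.log (d.factorial : ℝ) := by
    intro j
    rw [treeScale, one_div, inv_inv, Real.log_pow]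
  have ha_nonneg : ∀ j : ℕ,
      0 ≤ Real.log (coverNum d G j : ℝ) / Real.log (1 / treeScale d j) := by
    intro j
    apply div_nonneg (Real.log_natCast_nonneg _)
    rw [hden j]
    exact mul_nonneg (Nat.cast_nonneg _) (Real.log_natCast_nonneg _)
  have hfac2 : (2 : ℝ) ≤ (d.factorial : ℝ) := by
    exact_mod_cast le_trans hd (Nat.self_le_factorial d)
  have hlogfac : Real.log 2 ≤ Real.log (d.factorial : ℝ) :=
    Real.log_le_log (by norm_num) hfac2
  have hlog2 : (0 : ℝ) < Real.log 2 := Real.log_pos (by norm_num)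
  have hlogd : (0 : ℝ) ≤ Real.log (d : ℝ) := Real.log_natCast_nonneg d
  have hscale : ∀ j : ℕ, 1 ≤ j → 2 ^ j ≤ 2 * scaleExp d j := by
    intro j hj
    obtain ⟨i, rfl⟩ : ∃ i, j = i + 1 := ⟨j - 1, by omega⟩
    have h1 : d ^ i ≤ scaleExp d (i + 1) :=
      Finset.single_le_sum (f := fun t => d ^ t) (fun _ _ => Nat.zero_le _)
        (Finset.self_mem_range_succ i)
    have h2 : 2 ^ i ≤ d ^ i := Nat.pow_le_pow_left hd i
    calc 2 ^ (i + 1) = 2 * 2 ^ i := by ring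
      _ ≤ 2 * scaleExp d (i + 1) := by omega
  set C : ℝ := 16 * Real.log d / Real.log 2 with hC
  have habound : ∀ j : ℕ, 1 ≤ j →
      Real.log (coverNum d G j : ℝ) / Real.log (1 / treeScale d j)
        ≤ C * ((j : ℝ) ^ 2 * (1 / 2 : ℝ) ^ j) := by
    intro j hj
    have hj1 : (1 : ℝ) ≤ (j : ℝ) := by exact_mod_cast hj
    have hnum : Real.log (coverNum d G j : ℝ) ≤ 8 * (j : ℝ) ^ 2 * Real.log d := by
      have hkey : (coverNum d G j : ℝ) ≤ (((d ^ j * d ^ j) ^ (j + 3) : ℕ) : ℝ) := by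
        exact_mod_cast key j
      have h2 : Real.log (coverNum d G j : ℝ)
          ≤ Real.log (((d ^ j * d ^ j) ^ (j + 3) : ℕ) : ℝ) := by
        rcases Nat.eq_zero_or_pos (coverNum d G j) with h | h
        · rw [h, Nat.cast_zero, Real.log_zero]
          exact Real.log_natCast_nonneg _
        · exact Real.log_le_log (by exact_mod_cast h) hkey
      refine h2.trans ?_
      have h3 : ((d ^ j * d ^ j) ^ (j + 3) : ℕ) = d ^ (2 * j * (j + 3)) := by ring
      rw [h3]
      push_cast
      rw [Real.log_pow]
      have h4 : ((2 * j * (j + 3) : ℕ) : ℝ) ≤ 8 * (j : ℝ) ^ 2 := by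
        push_cast
        nlinarith [hj1]
      calc ((2 * j * (j + 3) : ℕ) : ℝ) * Real.log d
          ≤ 8 * (j : ℝ) ^ 2 * Real.log d := by
            apply mul_le_mul_of_nonneg_right h4 hlogd
        _ = _ := rfl
    have hden_ge : ((2 : ℝ) ^ j / 2) * Real.log 2 ≤ Real.log (1 / treeScale d j) := by
      rw [hden j]
      have h3 : ((2 : ℝ) ^ j / 2) ≤ (scaleExp d j : ℝ) := by
        have h4 := hscale j hj
        have h5 : ((2 : ℕ) ^ j : ℝ) ≤ ((2 * scaleExp d j : ℕ) : ℝ) := by exact_mod_cast h4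
        push_cast at h5
        linarith
      exact mul_le_mul h3 hlogfac hlog2.le (Nat.cast_nonneg _)
    have hdpos : (0 : ℝ) < ((2 : ℝ) ^ j / 2) * Real.log 2 := by positivity
    calc Real.log (coverNum d G j : ℝ) / Real.log (1 / treeScale d j)
        ≤ (8 * (j : ℝ) ^ 2 * Real.log d) / (((2 : ℝ) ^ j / 2) * Real.log 2) := by
          apply div_le_div₀ (by positivity) hnum hdpos hden_ge
      _ = C * ((j : ℝ) ^ 2 * (1 / 2 : ℝ) ^ j) := by
          rw [hC, div_pow, one_pow]
          have h2j : ((2 : ℝ) ^ j) ≠ 0 := by positivity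
          field_simp
          ring
  have hlim : Filter.Tendsto
      (fun j : ℕ => Real.log (coverNum d G j : ℝ) / Real.log (1 / treeScale d j))
      Filter.atTop (nhds 0) := by
    apply squeeze_zero' (Filter.Eventually.of_forall ha_nonneg)
      (Filter.eventually_atTop.mpr ⟨1, habound⟩)
    have h := tendsto_pow_const_mul_const_pow_of_lt_one 2
      (by norm_num : (0 : ℝ) ≤ 1 / 2) (by norm_num : (1 / 2 : ℝ) < 1)
    have h2 := h.const_mul C
    simpa using h2
  constructor
  · exact hlim.liminf_eq
  · exact hlim.limsup_eq
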